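/- Let N be a finitely generated free abelian group, B : N × N → ℤ a bilinear form, and define π1, π2 : N → M := Hom(N, ℤ) by π1(n) = B(n, ·) and π2(n) = B(·, n). Assume the image π2(N) is saturated in M (i.e., M/π2(N) is torsion-free). Then the pairing π1(N) × π2(N) → ℤ given by (π1(n1), π2(n2)) ↦ B(n1, n2) is well-defined and perfect; equivalently, the induced map N/ker(π1) → Hom(π2(N), ℤ) is an isomorphism of abelian groups. -/

import Mathlib

/-- If `π2(N)` is saturated in `M = Hom(N,ℤ)`, then the pairing
`(π1(n1), π2(n2)) ↦ B(n1,n2)` is well-defined and perfect: the induced map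
`N/ker(π1) → Hom(π2(N), ℤ)` is an isomorphism. Here `π1 = B`, `π2 = B.flip`. -/
theorem saturated_image_perfect_pairing
    (N : Type*) [AddCommGroup N] [Module.Free ℤ N] [Module.Finite ℤ N]
    (B : N →ₗ[ℤ] N →ₗ[ℤ] ℤ)
    (hsat : ∀ (m : N →ₗ[ℤ] ℤ) (c : ℤ), c ≠ 0 →
      c • m ∈ LinearMap.range B.flip → m ∈ LinearMap.range B.flip) :
    ∃ e : (N ⧸ LinearMap.ker B) ≃ₗ[ℤ] (↥(LinearMap.range B.flip) →ₗ[ℤ] ℤ),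
      ∀ n1 n2 : N,
        e (Submodule.Quotient.mk n1) ⟨B.flip n2, LinearMap.mem_range_self B.flip n2⟩ =
          B n1 n2 := by
  classical
  set P : Submodule ℤ (N →ₗ[ℤ] ℤ) := LinearMap.range B.flip with hP
  -- the quotient M/P is torsion-free, hence free, hence projective
  have htf : NoZeroSMulDivisors ℤ ((N →ₗ[ℤ] ℤ) ⧸ P) := by
    constructor
    intro c x hcx
    by_contra h
    push_neg at h
    obtain ⟨hc, hx⟩ := h
    obtain ⟨m, rfl⟩ := P.mkQ_surjective x
    have : c • m ∈ P := by
      rw [← Submodule.Quotient.mk_eq_zero]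
      simpa using hcx
    have hm : m ∈ P := hsat m c hc this
    exact hx (by simpa [Submodule.Quotient.mk_eq_zero] using hm)
  have hfree : Module.Free ℤ ((N →ₗ[ℤ] ℤ) ⧸ P) :=
    Module.free_of_finite_type_torsion_free'
  have hproj : Module.Projective ℤ ((N →ₗ[ℤ] ℤ) ⧸ P) := Module.Projective.of_free
  -- a linear section of the quotient map
  obtain ⟨s, hs⟩ := Module.projective_lifting_property P.mkQ LinearMap.id P.mkQ_surjective
  -- retraction onto P
  have hr : ∀ x : N →ₗ[ℤ] ℤ, x - s (P.mkQ x) ∈ P := by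
    intro x
    rw [← Submodule.Quotient.mk_eq_zero]
    have : P.mkQ (x - s (P.mkQ x)) = 0 := by
      rw [map_sub]
      have := LinearMap.congr_fun hs (P.mkQ x)
      simp only [LinearMap.coe_comp, Function.comp_apply, LinearMap.id_coe, id_eq] at this
      rw [this, sub_self]
    exact this
  let proj : (N →ₗ[ℤ] ℤ) →ₗ[ℤ] P :=
    (LinearMap.id - s ∘ₗ P.mkQ).codRestrict P (fun x => hr x)
  -- the map N → Dual P
  let φ : N →ₗ[ℤ] (P →ₗ[ℤ] ℤ) := (P.subtype).dualMap.comp (Module.Dual.eval ℤ N)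
  have hφ : ∀ (n : N) (p : P), φ n p = (p : N →ₗ[ℤ] ℤ) n := fun n p => rfl
  -- kernel of φ equals kernel of B
  have hker : LinearMap.ker φ = LinearMap.ker B := by
    ext n
    simp only [LinearMap.mem_ker]
    constructor
    · intro h
      ext n2
      have := LinearMap.congr_fun h ⟨B.flip n2, LinearMap.mem_range_self B.flip n2⟩
      simpa [hφ] using this
    · intro h
      ext p
      obtain ⟨p, n2, rfl⟩ := p
      simp [hφ, LinearMap.congr_fun h n2]
  -- surjectivity of φ
  have hsurj : Function.Surjective φ := by
    intro f
    set g : (N →ₗ[ℤ] ℤ) →ₗ[ℤ] ℤ := f ∘ₗ proj with hg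
    refine ⟨(Module.evalEquiv ℤ N).symm g, ?_⟩
    ext p
    obtain ⟨m, hm⟩ := p
    have h1 : φ ((Module.evalEquiv ℤ N).symm g) ⟨m, hm⟩
        = Module.Dual.eval ℤ N ((Module.evalEquiv ℤ N).symm g) m := rfl
    have h2 : Module.Dual.eval ℤ N ((Module.evalEquiv ℤ N).symm g) = g := by
      rw [← Module.evalEquiv_apply, (Module.evalEquiv ℤ N).apply_symm_apply]
    have hmk : P.mkQ m = 0 := by simpa [Submodule.Quotient.mk_eq_zero] using hm
    have h3 : proj m = ⟨m, hm⟩ := by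
      apply Subtype.ext
      simp [proj, hmk]
    rw [h1, h2, hg]
    simp [h3]
  -- build the equivalence
  have hle : LinearMap.ker B ≤ LinearMap.ker φ := le_of_eq hker.symm
  let φq : (N ⧸ LinearMap.ker B) →ₗ[ℤ] (P →ₗ[ℤ] ℤ) := (LinearMap.ker B).liftQ φ hle
  have hinj : Function.Injective φq := by
    rw [← LinearMap.ker_eq_bot]
    exact Submodule.ker_liftQ_eq_bot _ _ _ (le_of_eq hker)
  have hsurj' : Function.Surjective φq := by
    intro f
    obtain ⟨n, rfl⟩ := hsurj f
    exact ⟨Submodule.Quotient.mk n, rfl⟩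
  refine ⟨LinearEquiv.ofBijective φq ⟨hinj, hsurj'⟩, ?_⟩
  intro n1 n2
  simp [φq, hφ]
  rfl
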